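/- Fix γ ≥ 2 and δ > 0, and set ε_n = ((γ−1+δ)·log n / n)^(1/(γ−1)). Then the probability that G(n, 1−ε_n) has a dominating set of size γ−1 tends to 0 as n → ∞. -/

import Mathlib

open MeasureTheory Filter
open scoped ENNReal NNReal

def Dominates {V : Type*} (G : SimpleGraph V) (S : Finset V) : Prop :=
  ∀ v ∉ S, ∃ u ∈ S, G.Adj u v

noncomputable def domCount {V : Type*} [Fintype V] (G : SimpleGraph V) (k : ℕ) : ℕ :=
  letI : DecidablePred (fun S : Finset V => Dominates G S) := Classical.decPred _
  ((Finset.powersetCard k Finset.univ).filter (fun S => Dominates G S)).card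

noncomputable def nonDomCount {V : Type*} [Fintype V] (G : SimpleGraph V) (k : ℕ) : ℕ :=
  letI : DecidablePred (fun S : Finset V => Dominates G S) := Classical.decPred _
  ((Finset.powersetCard k Finset.univ).filter (fun S => ¬ Dominates G S)).card

noncomputable def domNum {V : Type*} [Fintype V] (G : SimpleGraph V) : ℕ :=
  sInf {k | ∃ S : Finset V, S.card = k ∧ Dominates G S}

def graphOf {n : ℕ} (σ : Sym2 (Fin n) → Bool) : SimpleGraph (Fin n) where
  Adj i j := i ≠ j ∧ σ s(i, j) = true
  symm := by
    constructor
    intro i j h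
    exact ⟨h.1.symm, by rw [Sym2.eq_swap]; exact h.2⟩
  loopless := by constructor; intro i h; exact h.1 rfl

noncomputable def erMeasure (n : ℕ) (p : ℝ≥0∞) (h : p ≤ 1) :
    Measure (Sym2 (Fin n) → Bool) :=
  Measure.pi fun _ =>
    (PMF.ofFintype (fun b => cond b p (1 - p)) (by simp [add_tsub_cancel_of_le h])).toMeasure


/-- For `γ ≥ 2`, `δ > 0` and `ε_n = ((γ-1+δ)·log n / n)^(1/(γ-1))`, the
probability that `G(n, 1-ε_n)` has a dominating set of size `γ-1` tends to 0. -/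
lemma measurableSet_all {α : Type*} [MeasurableSpace α] [MeasurableSingletonClass α] [Finite α]
    (s : Set α) : MeasurableSet s := s.toFinite.measurableSet

lemma core {V : Type*} [DecidableEq V] (p : ℝ≥0∞) (h : p ≤ 1) (T : Finset V) :
    ∀ (ι : Type) [Fintype ι] [DecidableEq ι] (E : V → Finset ι),
      ((T : Set V).PairwiseDisjoint E) →
      (Measure.pi fun _ : ι => (PMF.ofFintype (fun b => cond b p (1 - p)) (by simp [add_tsub_cancel_of_le h])).toMeasure)
        {σ : ι → Bool | ∀ v ∈ T, ∃ e ∈ E v, σ e = true}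
      = ∏ v ∈ T, (1 - (1 - p) ^ (E v).card) := by
  induction T using Finset.induction_on with
  | empty =>
    intro ι _ _ E _
    simp
  | @insert v₀ T hv₀ ih =>
    intro ι _ _ E hdisj
    classical
    have hd : ∀ v ∈ T, Disjoint (E v) (E v₀) := fun v hv =>
      hdisj (by simp [hv]) (by simp) (fun hh => hv₀ (hh ▸ hv))
    set B := (PMF.ofFintype (fun b => cond b p (1 - p)) (by simp [add_tsub_cancel_of_le h])).toMeasure with hB
    have hΦ := measurePreserving_piEquivPiSubtypeProd (fun _ : ι => B) (· ∈ E v₀)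
    set Φ := MeasurableEquiv.piEquivPiSubtypeProd (fun _ : ι => Bool) (· ∈ E v₀) with hΦdef
    set E' : V → Finset {i : ι // ¬ i ∈ E v₀} :=
      fun v => (E v).preimage (fun j => (j : ι)) (Subtype.val_injective.injOn) with hE'
    set s : Set ({i : ι // i ∈ E v₀} → Bool) := {a | ∃ j, a j = true} with hsdef
    set t : Set ({i : ι // ¬ i ∈ E v₀} → Bool) := {b | ∀ v ∈ T, ∃ e ∈ E' v, b e = true} with htdef
    have hev : {σ : ι → Bool | ∀ v ∈ insert v₀ T, ∃ e ∈ E v, σ e = true}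
        = Φ ⁻¹' (s ×ˢ t) := by
      ext σ
      simp only [Set.mem_setOf_eq, Set.mem_preimage, Set.mem_prod, hsdef, htdef]
      constructor
      · intro H
        refine ⟨?_, ?_⟩
        · obtain ⟨e, he, hse⟩ := H v₀ (Finset.mem_insert_self _ _)
          exact ⟨⟨e, he⟩, hse⟩
        · intro v hv
          obtain ⟨e, he, hse⟩ := H v (Finset.mem_insert_of_mem hv)
          exact ⟨⟨e, Finset.disjoint_left.mp (hd v hv) he⟩, Finset.mem_preimage.mpr he, hse⟩
      · rintro ⟨⟨j, hj⟩, H2⟩ v hv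
        rcases Finset.mem_insert.mp hv with rfl | hv
        · exact ⟨j.1, j.2, hj⟩
        · obtain ⟨e, he, hbe⟩ := H2 v hv
          exact ⟨e.1, Finset.mem_preimage.mp he, hbe⟩
    have hs : (Measure.pi fun _ : {i : ι // i ∈ E v₀} => B) s
        = 1 - (1 - p) ^ (E v₀).card := by
      have hsc : s = ({fun _ => false} : Set ({i : ι // i ∈ E v₀} → Bool))ᶜ := by
        ext a
        simp [hsdef, funext_iff]
      rw [hsc, prob_compl_eq_one_sub (measurableSet_singleton _)]
      congr 1
      rw [← Set.univ_pi_singleton, Measure.pi_pi]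
      simp only [hB, PMF.toMeasure_apply_singleton _ _ (measurableSet_singleton _),
        PMF.ofFintype_apply, cond_false]
      rw [Finset.prod_const, Finset.card_univ, Fintype.card_coe]
    have hdisj' : (T : Set V).PairwiseDisjoint E' := by
      intro a ha b hb hab
      have hD : Disjoint (E a) (E b) := hdisj (by simp at ha ⊢; exact Or.inr ha)
        (by simp at hb ⊢; exact Or.inr hb) hab
      simp only [Function.onFun, Finset.disjoint_left] at hD ⊢
      intro x hx1 hx2
      exact hD (Finset.mem_preimage.mp hx1) (Finset.mem_preimage.mp hx2)
    have hcard : ∀ v ∈ T, (E' v).card = (E v).card := by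
      intro v hv
      rw [hE', Finset.card_preimage]
      congr 1
      apply Finset.filter_true_of_mem
      intro e he
      exact ⟨⟨e, Finset.disjoint_left.mp (hd v hv) he⟩, rfl⟩
    have ht : (Measure.pi fun _ : {i : ι // ¬ i ∈ E v₀} => B) t
        = ∏ v ∈ T, (1 - (1 - p) ^ (E v).card) := by
      rw [htdef, ih _ E' hdisj']
      exact Finset.prod_congr rfl (fun v hv => by rw [hcard v hv])
    rw [hev, hΦ.measure_preimage (measurableSet_all _).nullMeasurableSet, Measure.prod_prod,
      Finset.prod_insert hv₀]
    have := congrArg₂ (· * ·) hs ht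
    convert this using 3 <;> congr 1 <;> exact Subsingleton.elim _ _

lemma er_dom (n : ℕ) (p : ℝ≥0∞) (h : p ≤ 1) (S : Finset (Fin n)) :
    erMeasure n p h {σ | Dominates (graphOf σ) S}
      = (1 - (1 - p) ^ S.card) ^ (n - S.card) := by
  classical
  have hset : {σ : Sym2 (Fin n) → Bool | Dominates (graphOf σ) S}
      = {σ | ∀ v ∈ Sᶜ, ∃ e ∈ (S.image fun u => s(u, v)), σ e = true} := by
    ext σ
    simp only [Set.mem_setOf_eq, Dominates, Finset.mem_compl]
    constructor
    · intro H v hv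
      obtain ⟨u, hu, hne, he⟩ := H v hv
      exact ⟨s(u, v), Finset.mem_image.mpr ⟨u, hu, rfl⟩, he⟩
    · intro H v hv
      obtain ⟨e, he, hse⟩ := H v hv
      obtain ⟨u, hu, rfl⟩ := Finset.mem_image.mp he
      exact ⟨u, hu, fun huv => hv (huv ▸ hu), hse⟩
  have hdisj : ((Sᶜ : Finset (Fin n)) : Set (Fin n)).PairwiseDisjoint
      (fun v => S.image fun u => s(u, v)) := by
    intro a ha b hb hab
    simp only [Finset.mem_coe, Finset.mem_compl] at ha hb
    simp only [Function.onFun, Finset.disjoint_left]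
    intro e he1 he2
    obtain ⟨u, hu, rfl⟩ := Finset.mem_image.mp he1
    obtain ⟨u', hu', heq⟩ := Finset.mem_image.mp he2
    rcases Sym2.eq_iff.mp heq with ⟨_, hba⟩ | ⟨hua, _⟩
    · exact hab hba.symm
    · exact ha (hua ▸ hu')
  have hcard : ∀ v ∈ Sᶜ, (S.image fun u => s(u, v)).card = S.card := by
    intro v hv
    simp only [Finset.mem_compl] at hv
    apply Finset.card_image_of_injOn
    intro u hu u' hu' heq
    rcases Sym2.eq_iff.mp heq with ⟨h1, _⟩ | ⟨h1, h2⟩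
    · exact h1
    · exact absurd (h1 ▸ hu) hv
  rw [hset, erMeasure, core p h Sᶜ _ _ hdisj,
    Finset.prod_congr rfl (fun v hv => by rw [hcard v hv]), Finset.prod_const,
    Finset.card_compl, Fintype.card_fin]

lemma er_bound (n k : ℕ) (p : ℝ≥0∞) (h : p ≤ 1) :
    erMeasure n p h {σ | ∃ S : Finset (Fin n), S.card = k ∧ Dominates (graphOf σ) S}
      ≤ (n.choose k) * (1 - (1 - p) ^ k) ^ (n - k) := by
  classical
  have hsub : {σ : Sym2 (Fin n) → Bool | ∃ S : Finset (Fin n), S.card = k ∧ Dominates (graphOf σ) S}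
      ⊆ ⋃ S ∈ Finset.powersetCard k (Finset.univ : Finset (Fin n)),
          {σ | Dominates (graphOf σ) S} := by
    rintro σ ⟨S, hSc, hSd⟩
    exact Set.mem_biUnion (Finset.mem_powersetCard.mpr ⟨Finset.subset_univ _, hSc⟩) hSd
  calc erMeasure n p h _ ≤ erMeasure n p h (⋃ S ∈ Finset.powersetCard k (Finset.univ : Finset (Fin n)),
          {σ | Dominates (graphOf σ) S}) := measure_mono hsub
    _ ≤ ∑ S ∈ Finset.powersetCard k (Finset.univ : Finset (Fin n)),
          erMeasure n p h {σ | Dominates (graphOf σ) S} := measure_biUnion_finset_le _ _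
    _ = ∑ _S ∈ Finset.powersetCard k (Finset.univ : Finset (Fin n)),
          (1 - (1 - p) ^ k) ^ (n - k) := by
        refine Finset.sum_congr rfl (fun S hS => ?_)
        rw [er_dom, (Finset.mem_powersetCard.mp hS).2]
    _ = (n.choose k) * (1 - (1 - p) ^ k) ^ (n - k) := by
        rw [Finset.sum_const, Finset.card_powersetCard, Finset.card_univ, Fintype.card_fin,
          nsmul_eq_mul]

theorem stmt12 (γ : ℕ) (hγ : 2 ≤ γ) (δ : ℝ) (hδ : 0 < δ) :
    Tendsto
      (fun n : ℕ =>
        (erMeasure n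
            (1 - ENNReal.ofReal
              ((((γ : ℝ) - 1 + δ) * Real.log n / n) ^ ((1 : ℝ) / ((γ : ℝ) - 1))))
            tsub_le_self
          {σ | ∃ S : Finset (Fin n), S.card = γ - 1 ∧ Dominates (graphOf σ) S}))
      atTop (nhds 0) := by
  have hγR : (2:ℝ) ≤ (γ:ℝ) := by exact_mod_cast hγ
  have hkR : (0:ℝ) < (γ:ℝ) - 1 := by linarith
  set kR : ℝ := (γ:ℝ) - 1 with hkRdef
  set k : ℕ := γ - 1 with hkdef
  have hkcast : (k:ℝ) = kR := by
    rw [hkdef, hkRdef, Nat.cast_sub (by omega), Nat.cast_one]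
  set x : ℕ → ℝ := fun n => ((γ:ℝ) - 1 + δ) * Real.log n / n with hxdef
  set ε : ℕ → ℝ := fun n => (x n) ^ ((1:ℝ) / ((γ:ℝ) - 1)) with hεdef
  -- x n → 0
  have hxlim : Tendsto x atTop (nhds 0) := by
    have hlog : Tendsto (fun n : ℕ => Real.log n / n) atTop (nhds 0) :=
      (Real.isLittleO_log_id_atTop.tendsto_div_nhds_zero).comp tendsto_natCast_atTop_atTop
    have := hlog.const_mul ((γ:ℝ) - 1 + δ)
    simp only [mul_zero] at this
    refine this.congr (fun n => ?_)
    rw [hxdef]; ring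
  have h1 : ∀ᶠ n : ℕ in atTop, 1 ≤ n := eventually_ge_atTop 1
  have h2 : ∀ᶠ n : ℕ in atTop, x n ≤ 1 := hxlim.eventually (eventually_le_nhds zero_lt_one)
  have h3 : ∀ᶠ n : ℕ in atTop, 2 * kR * (kR + δ) / δ ≤ (n:ℝ) :=
    tendsto_natCast_atTop_atTop.eventually_ge_atTop _
  have h4 : ∀ᶠ n : ℕ in atTop, γ ≤ n := eventually_ge_atTop γ
  have hbound : ∀ᶠ n : ℕ in atTop,
      (erMeasure n (1 - ENNReal.ofReal
          ((((γ : ℝ) - 1 + δ) * Real.log n / n) ^ ((1 : ℝ) / ((γ : ℝ) - 1))))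
          tsub_le_self
        {σ | ∃ S : Finset (Fin n), S.card = γ - 1 ∧ Dominates (graphOf σ) S})
        ≤ ENNReal.ofReal ((n:ℝ) ^ (-(δ/2))) := by
    filter_upwards [h1, h2, h3, h4] with n hn1 hn2 hn3 hn4
    have hkn : k ≤ n := by omega
    have hn0 : (0:ℝ) < n := by exact_mod_cast (by omega : 0 < n)
    have hlog : 0 ≤ Real.log n := Real.log_nonneg (by exact_mod_cast hn1)
    have hx0 : 0 ≤ x n := by
      rw [hxdef]
      exact div_nonneg (mul_nonneg (by linarith) hlog) hn0.le
    have hε0 : 0 ≤ ε n := Real.rpow_nonneg hx0 _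
    have hε1 : ε n ≤ 1 := Real.rpow_le_one hx0 hn2 (by positivity)
    have hq : 1 - (1 - ENNReal.ofReal (ε n)) = ENNReal.ofReal (ε n) :=
      ENNReal.sub_sub_cancel ENNReal.one_ne_top (ENNReal.ofReal_le_one.mpr hε1)
    have hεk : ε n ^ k = x n := by
      rw [hεdef, ← Real.rpow_natCast ((x n) ^ ((1:ℝ) / ((γ:ℝ) - 1))) k,
        ← Real.rpow_mul hx0, hkcast, hkRdef, one_div_mul_cancel (by linarith : (γ:ℝ) - 1 ≠ 0),
        Real.rpow_one]
    have h1x : 0 ≤ 1 - x n := by linarith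
    -- real-number bound
    have a1 : (n.choose k : ℝ) ≤ (n:ℝ)^k := by
      exact_mod_cast Nat.cast_le.mpr (Nat.choose_le_pow n k)
    have a2 : (1 - x n)^(n-k) ≤ Real.exp (-(x n))^(n-k) :=
      pow_le_pow_left₀ h1x (by linarith [Real.add_one_le_exp (-(x n))]) _
    have a3 : Real.exp (-(x n))^(n-k) = Real.exp (-(((n-k:ℕ):ℝ) * x n)) := by
      rw [← Real.exp_nat_mul]; ring_nf
    have a4 : (kR + δ/2) * Real.log n ≤ ((n-k:ℕ):ℝ) * x n := by
      have hm : ((n-k:ℕ):ℝ) = (n:ℝ) - kR := by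
        rw [Nat.cast_sub hkn, hkcast]
      have hd3 : 2 * kR * (kR + δ) ≤ (n:ℝ) * δ := by
        have := (div_le_iff₀ hδ).mp hn3
        linarith
      rw [hm, hxdef]
      have hcoef : (kR + δ/2) ≤ ((n:ℝ) - kR) * ((γ:ℝ) - 1 + δ) / n := by
        rw [le_div_iff₀ hn0]
        nlinarith
      calc (kR + δ/2) * Real.log n
          ≤ (((n:ℝ) - kR) * ((γ:ℝ) - 1 + δ) / n) * Real.log n :=
            mul_le_mul_of_nonneg_right hcoef hlog
        _ = ((n:ℝ) - kR) * (((γ:ℝ) - 1 + δ) * Real.log n / n) := by ring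
    have a5 : Real.exp (-(((n-k:ℕ):ℝ) * x n)) ≤ Real.exp (-((kR + δ/2) * Real.log n)) :=
      Real.exp_le_exp.mpr (by linarith)
    have a6 : Real.exp (-((kR + δ/2) * Real.log n)) = (n:ℝ) ^ (-(kR + δ/2)) := by
      rw [Real.rpow_def_of_pos hn0]; ring_nf
    have breal : (n.choose k : ℝ) * (1 - x n)^(n-k) ≤ (n:ℝ)^(-(δ/2)) := by
      calc (n.choose k : ℝ) * (1 - x n)^(n-k)
          ≤ (n:ℝ)^k * Real.exp (-((kR + δ/2) * Real.log n)) := by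
            apply mul_le_mul a1 ((a2.trans (a3 ▸ le_refl _)).trans (a3 ▸ a5))
              (pow_nonneg h1x _) (by positivity)
        _ = (n:ℝ) ^ (-(δ/2)) := by
            rw [a6, ← Real.rpow_natCast (n:ℝ) k, hkcast, ← Real.rpow_add hn0]
            congr 1; ring
    calc (erMeasure n (1 - ENNReal.ofReal
          ((((γ : ℝ) - 1 + δ) * Real.log n / n) ^ ((1 : ℝ) / ((γ : ℝ) - 1))))
          tsub_le_self
        {σ | ∃ S : Finset (Fin n), S.card = γ - 1 ∧ Dominates (graphOf σ) S})
        ≤ (n.choose k) * (1 - (1 - (1 - ENNReal.ofReal (ε n)))^k)^(n-k) :=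
          er_bound n k _ tsub_le_self
      _ = ENNReal.ofReal ((n.choose k) * (1 - x n)^(n-k)) := by
          rw [hq, ← ENNReal.ofReal_pow hε0, hεk,
            show (1 : ℝ≥0∞) - ENNReal.ofReal (x n) = ENNReal.ofReal (1 - x n) by
              rw [ENNReal.ofReal_sub 1 hx0, ENNReal.ofReal_one],
            ← ENNReal.ofReal_pow h1x, ← ENNReal.ofReal_natCast,
            ← ENNReal.ofReal_mul (Nat.cast_nonneg _)]
      _ ≤ ENNReal.ofReal ((n:ℝ) ^ (-(δ/2))) := ENNReal.ofReal_le_ofReal breal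
  have hupper : Tendsto (fun n : ℕ => ENNReal.ofReal ((n:ℝ) ^ (-(δ/2)))) atTop (nhds 0) := by
    have hr : Tendsto (fun n : ℕ => (n:ℝ) ^ (-(δ/2))) atTop (nhds 0) :=
      (tendsto_rpow_neg_atTop (half_pos hδ)).comp tendsto_natCast_atTop_atTop
    simpa using ENNReal.tendsto_ofReal hr
  exact tendsto_of_tendsto_of_tendsto_of_le_of_le' tendsto_const_nhds hupper
    (Eventually.of_forall fun n => zero_le) hbound
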